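/- arXiv:1502.07650 — 4 statements merged into one kernel-verified Lean document; each statement's English description precedes it below -/
import Mathlib

section
/- Every translation-invariant bounded linear operator from L²(ℝ;ℂ) to L^∞(ℝ;ℂ) is a convolution operator: if L : L²(ℝ;ℂ) → L^∞(ℝ;ℂ) is a continuous linear map such that for every K ∈ ℝ and every x ∈ L²(ℝ;ℂ) one has L(x(· + K))(t) = (Lx)(t + K) for almost every t, then there exists h ∈ L²(ℝ;ℂ) such that for every x ∈ L²(ℝ;ℂ), (Lx)(t) = ∫_{-∞}^{∞} x(s) h(t − s) ds for almost every t ∈ ℝ. -/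
open MeasureTheory Filter Topology Set ComplexConjugate

lemma cont_le_of_ae_le {φ : ℝ → ℝ} (hφ : Continuous φ) {c : ℝ}
    (h : ∀ᵐ t ∂(volume : Measure ℝ), φ t ≤ c) : ∀ t, φ t ≤ c := by
  by_contra hc
  push_neg at hc
  obtain ⟨t, ht⟩ := hc
  have hopen : IsOpen {u : ℝ | c < φ u} := isOpen_lt continuous_const hφ
  have hpos : (0 : ENNReal) < volume {u : ℝ | c < φ u} :=
    hopen.measure_pos volume ⟨t, ht⟩
  rw [ae_iff] at h
  simp only [not_le] at h
  exact hpos.ne' h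

lemma ae_translate {p : ℝ → Prop} (h : ∀ᵐ u ∂(volume : Measure ℝ), p u) (t : ℝ) :
    ∀ᵐ s ∂(volume : Measure ℝ), p (s + t) :=
  (measurePreserving_add_right volume t).quasiMeasurePreserving.ae h

/-- Key estimate: for a strongly measurable, essentially bounded, L∞-translation-continuous
function, the averaged functions converge essentially uniformly. -/
lemma exists_cont_rep_sm (g : ℝ → ℂ) (hg : StronglyMeasurable g)
    (C : ℝ) (hbdd : ∀ᵐ t ∂(volume : Measure ℝ), ‖g t‖ ≤ C)
    (htrans : ∀ ε : ℝ, 0 < ε → ∃ δ : ℝ, 0 < δ ∧ ∀ s : ℝ, |s| ≤ δ →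
      ∀ᵐ t ∂(volume : Measure ℝ), ‖g (t + s) - g t‖ ≤ ε) :
    ∃ F : ℝ → ℂ, Continuous F ∧ g =ᵐ[(volume : Measure ℝ)] F := by
  have hgm : Measurable g := hg.measurable
  -- interval integrability
  have hint : ∀ a b : ℝ, IntervalIntegrable g volume a b := by
    intro a b
    rw [intervalIntegrable_iff]
    refine Integrable.mono' (integrableOn_const ?_) hg.aestronglyMeasurable.restrict
      (ae_restrict_of_ae hbdd)
    rw [Set.uIoc]
    exact measure_Ioc_lt_top.ne
  have hintt : ∀ (t a b : ℝ), IntervalIntegrable (fun s => g (s + t)) volume a b := by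
    intro t a b
    simpa using (hint (a + t) (b + t)).comp_add_right t
  -- the primitive and averages
  set P : ℝ → ℂ := fun t => ∫ x in (0:ℝ)..t, g x with hP
  have hPc : Continuous P := intervalIntegral.continuous_primitive hint 0
  set F : ℝ → ℝ → ℂ := fun δ t => δ⁻¹ • (P (t + δ) - P t) with hF
  have hFc : ∀ δ, Continuous (F δ) := fun δ => by
    show Continuous fun t => δ⁻¹ • (P (t + δ) - P t)
    fun_prop
  -- key estimate
  have hest : ∀ ε : ℝ, 0 < ε → ∃ δ₀ : ℝ, 0 < δ₀ ∧ ∀ δ : ℝ, 0 < δ → δ ≤ δ₀ →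
      ∀ᵐ t ∂(volume : Measure ℝ), ‖F δ t - g t‖ ≤ ε := by
    intro ε hε
    obtain ⟨δ₀, hδ₀, hδ₀p⟩ := htrans ε hε
    refine ⟨δ₀, hδ₀, fun δ hδ hδle => ?_⟩
    -- swap quantifiers via Fubini
    have hmeas : MeasurableSet {x : ℝ × ℝ | ‖g (x.1 + x.2) - g x.1‖ ≤ ε} := by
      apply measurableSet_le _ measurable_const
      exact ((hgm.comp (measurable_fst.add measurable_snd)).sub (hgm.comp measurable_fst)).norm
    have h1 : ∀ᵐ s ∂(volume.restrict (Set.Ioc 0 δ)), ∀ᵐ t ∂(volume : Measure ℝ),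
        ‖g (t + s) - g t‖ ≤ ε := by
      refine (ae_restrict_mem measurableSet_Ioc).mono fun s hs => ?_
      exact hδ₀p s (by rw [abs_of_pos hs.1]; exact hs.2.trans hδle)
    have h2 : ∀ᵐ t ∂(volume : Measure ℝ), ∀ᵐ s ∂(volume.restrict (Set.Ioc 0 δ)),
        ‖g (t + s) - g t‖ ≤ ε := by
      rwa [← Measure.ae_ae_comm] at h1
      exact hmeas
    filter_upwards [h2] with t ht
    -- compute F δ t - g t
    have e1 : P (t + δ) - P t = ∫ x in t..(t + δ), g x :=
      intervalIntegral.integral_interval_sub_left (hint 0 (t + δ)) (hint 0 t)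
    have e2 : ∫ x in t..(t + δ), g x = ∫ s in (0:ℝ)..δ, g (s + t) := by
      rw [intervalIntegral.integral_comp_add_right g t, zero_add, add_comm δ t]
    have e3 : (∫ s in (0:ℝ)..δ, g (s + t)) - δ • g t
        = ∫ s in (0:ℝ)..δ, (g (s + t) - g t) := by
      rw [intervalIntegral.integral_sub (hintt t 0 δ) intervalIntegrable_const,
        intervalIntegral.integral_const, sub_zero]
    have e4 : ‖∫ s in (0:ℝ)..δ, (g (s + t) - g t)‖ ≤ ε * δ := by
      have hb : ∀ᵐ s ∂(volume.restrict (Set.uIoc 0 δ)), ‖g (s + t) - g t‖ ≤ ε := by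
        rw [Set.uIoc_of_le hδ.le]
        filter_upwards [ht] with s hs
        simpa [add_comm] using hs
      calc ‖∫ s in (0:ℝ)..δ, (g (s + t) - g t)‖
          ≤ |∫ s in (0:ℝ)..δ, (ε:ℝ)| :=
            intervalIntegral.norm_integral_le_abs_of_norm_le hb intervalIntegrable_const
        _ = ε * δ := by
            rw [intervalIntegral.integral_const, smul_eq_mul, sub_zero,
              abs_of_nonneg (by positivity), mul_comm]
    have : F δ t - g t = δ⁻¹ • ∫ s in (0:ℝ)..δ, (g (s + t) - g t) := by
      rw [hF]
      simp only
      rw [e1, e2, ← e3, smul_sub, smul_smul, inv_mul_cancel₀ hδ.ne', one_smul]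
    rw [this, norm_smul]
    simp only [norm_inv, Real.norm_eq_abs, abs_of_pos hδ]
    calc δ⁻¹ * ‖∫ s in (0:ℝ)..δ, (g (s + t) - g t)‖ ≤ δ⁻¹ * (ε * δ) := by
          gcongr
      _ = ε := by field_simp
  -- choose a sequence of scales
  choose Δ hΔpos hΔ using fun n : ℕ => hest (1 / (n + 1)) (by positivity)
  set d : ℕ → ℝ := fun n => (Finset.range (n + 1)).inf' (by simp) Δ with hd
  have hdpos : ∀ n, 0 < d n := by
    intro n
    rw [hd]
    simp only [Finset.lt_inf'_iff]
    exact fun i _ => hΔpos i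
  have hdle : ∀ k n, k ≤ n → d n ≤ Δ k := fun k n hkn =>
    Finset.inf'_le _ (Finset.mem_range.2 (Nat.lt_succ_of_le hkn))
  set G : ℕ → ℝ → ℂ := fun n => F (d n) with hG
  have hGae : ∀ k n, k ≤ n → ∀ᵐ t ∂(volume : Measure ℝ), ‖G n t - g t‖ ≤ 1 / (k + 1) :=
    fun k n hkn => hΔ k (d n) (hdpos n) (hdle k n hkn)
  have hGdiff : ∀ k n m, k ≤ n → k ≤ m → ∀ t, ‖G n t - G m t‖ ≤ 2 / (k + 1) := by
    intro k n m hkn hkm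
    apply cont_le_of_ae_le (((hFc (d n)).sub (hFc (d m))).norm)
    filter_upwards [hGae k n hkn, hGae k m hkm] with t h1 h2
    calc ‖G n t - G m t‖ ≤ ‖G n t - g t‖ + ‖g t - G m t‖ := norm_sub_le_norm_sub_add_norm_sub _ _ _
      _ ≤ 1 / (k + 1) + 1 / (k + 1) := by
          refine add_le_add h1 ?_
          rwa [norm_sub_rev]
      _ = 2 / (k + 1) := by ring
  have hsmall : ∀ ε : ℝ, 0 < ε → ∃ k : ℕ, 2 / (k + 1 : ℝ) < ε := by
    intro ε hε
    obtain ⟨k, hk⟩ := exists_nat_gt (2 / ε)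
    refine ⟨k, ?_⟩
    rw [div_lt_iff₀ (by positivity)]
    calc (2:ℝ) = ε * (2 / ε) := by field_simp
      _ < ε * (k + 1) := by
          apply mul_lt_mul_of_pos_left _ hε
          exact hk.trans (lt_add_one _)
  have hcauchy : ∀ t, CauchySeq (fun n => G n t) := by
    intro t
    rw [Metric.cauchySeq_iff']
    intro ε hε
    obtain ⟨k, hk⟩ := hsmall ε hε
    exact ⟨k, fun n hn => lt_of_le_of_lt (by
      rw [dist_eq_norm]; exact hGdiff k n k hn le_rfl t) hk⟩
  have hlim0 := fun t => cauchySeq_tendsto_of_complete (hcauchy t)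
  set Fi : ℝ → ℂ := fun t => (hlim0 t).choose with hFi
  have hlim : ∀ t, Tendsto (fun n => G n t) atTop (𝓝 (Fi t)) := fun t => (hlim0 t).choose_spec
  have hFiG : ∀ k n, k ≤ n → ∀ t, ‖Fi t - G n t‖ ≤ 2 / (k + 1) := by
    intro k n hkn t
    have htd : Tendsto (fun m => ‖G m t - G n t‖) atTop (𝓝 ‖Fi t - G n t‖) :=
      ((hlim t).sub tendsto_const_nhds).norm
    refine le_of_tendsto htd ?_
    filter_upwards [eventually_ge_atTop k] with m hm
    exact hGdiff k m n hm hkn t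
  have huniform : TendstoUniformly (fun n t => G n t) Fi atTop := by
    rw [Metric.tendstoUniformly_iff]
    intro ε hε
    obtain ⟨k, hk⟩ := hsmall ε hε
    filter_upwards [eventually_ge_atTop k] with n hn t
    rw [dist_eq_norm]
    exact lt_of_le_of_lt (hFiG k n hn t) hk
  have hFicont : Continuous Fi :=
    huniform.continuous (Eventually.of_forall fun n => hFc (d n)).frequently
  refine ⟨Fi, hFicont, ?_⟩
  have hall : ∀ᵐ t ∂(volume : Measure ℝ), ∀ k : ℕ, ‖G k t - g t‖ ≤ 1 / (k + 1) :=
    ae_all_iff.2 fun k => hGae k k le_rfl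
  filter_upwards [hall] with t ht
  have hd0 : Tendsto (fun n : ℕ => dist (G n t) (g t)) atTop (𝓝 0) := by
    refine squeeze_zero (fun n => dist_nonneg) (fun n => ?_)
      tendsto_one_div_add_atTop_nhds_zero_nat
    rw [dist_eq_norm]
    exact ht n
  have h1 : Tendsto (fun n => G n t) atTop (𝓝 (g t)) :=
    tendsto_iff_dist_tendsto_zero.2 hd0
  exact tendsto_nhds_unique h1 (hlim t)

lemma ae_eq_translate {f g : ℝ → ℂ} (h : f =ᵐ[(volume : Measure ℝ)] g) (t : ℝ) :
    (fun s => f (s + t)) =ᵐ[(volume : Measure ℝ)] (fun s => g (s + t)) :=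
  (measurePreserving_add_right volume t).quasiMeasurePreserving.ae_eq_comp h

lemma exists_cont_rep (f : ℝ → ℂ) (hf : AEStronglyMeasurable f (volume : Measure ℝ))
    (C : ℝ) (hbdd : ∀ᵐ t ∂(volume : Measure ℝ), ‖f t‖ ≤ C)
    (htrans : ∀ ε : ℝ, 0 < ε → ∃ δ : ℝ, 0 < δ ∧ ∀ s : ℝ, |s| ≤ δ →
      ∀ᵐ t ∂(volume : Measure ℝ), ‖f (t + s) - f t‖ ≤ ε) :
    ∃ F : ℝ → ℂ, Continuous F ∧ f =ᵐ[(volume : Measure ℝ)] F := by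
  set g := hf.mk f with hgdef
  have hfg : f =ᵐ[(volume : Measure ℝ)] g := hf.ae_eq_mk
  have hbdd' : ∀ᵐ t ∂(volume : Measure ℝ), ‖g t‖ ≤ C := by
    filter_upwards [hbdd, hfg] with t h1 h2
    rw [← h2]; exact h1
  have htrans' : ∀ ε : ℝ, 0 < ε → ∃ δ : ℝ, 0 < δ ∧ ∀ s : ℝ, |s| ≤ δ →
      ∀ᵐ t ∂(volume : Measure ℝ), ‖g (t + s) - g t‖ ≤ ε := by
    intro ε hε
    obtain ⟨δ, hδ, hp⟩ := htrans ε hε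
    refine ⟨δ, hδ, fun s hs => ?_⟩
    filter_upwards [hp s hs, hfg, ae_eq_translate hfg s] with t h1 h3 h4
    rw [← h4, ← h3]; exact h1
  obtain ⟨F, hFc, hgF⟩ := exists_cont_rep_sm g hf.stronglyMeasurable_mk C hbdd' htrans'
  exact ⟨F, hFc, hfg.trans hgF⟩

local notation "𝕏" => Lp ℂ 2 (volume : Measure ℝ)

/-- Every translation-invariant bounded linear operator from
`L²(ℝ;ℂ)` to `L^∞(ℝ;ℂ)` is a convolution operator. -/
theorem translation_invariant_operator_is_convolution
    (L : Lp ℂ 2 (volume : Measure ℝ) →L[ℂ] Lp ℂ ⊤ (volume : Measure ℝ))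
    (hinv : ∀ (K : ℝ) (x y : Lp ℂ 2 (volume : Measure ℝ)),
      (y : ℝ → ℂ) =ᵐ[volume] (fun s => x (s + K)) →
      (L y : ℝ → ℂ) =ᵐ[volume] (fun t => L x (t + K))) :
    ∃ h : Lp ℂ 2 (volume : Measure ℝ),
      ∀ x : Lp ℂ 2 (volume : Measure ℝ),
        (L x : ℝ → ℂ) =ᵐ[volume] (fun t => ∫ s : ℝ, x s * h (t - s)) := by
  classical
  -- the translation operators on L²
  set τ : ℝ → 𝕏 → 𝕏 := fun K =>
    Lp.compMeasurePreserving (fun s : ℝ => s + K) (measurePreserving_add_right volume K) with hτ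
  have hτcoe : ∀ (K : ℝ) (x : 𝕏), (τ K x : ℝ → ℂ) =ᵐ[volume] fun s => x (s + K) := fun K x =>
    Lp.coeFn_compMeasurePreserving x _
  have hτnorm : ∀ (K : ℝ) (x : 𝕏), ‖τ K x - x‖ = ‖τ K x - x‖ := fun _ _ => rfl
  -- continuity of translations at 0
  have hτcont : ∀ x : 𝕏, Tendsto (fun K => τ K x) (𝓝 0) (𝓝 x) := by
    intro x
    have hgc : Continuous (fun K : ℝ => (⟨fun s => s + K, by fun_prop⟩ : C(ℝ, ℝ))) := by
      apply ContinuousMap.continuous_of_continuous_uncurry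
      exact continuous_snd.add continuous_fst
    have hcont : Continuous (fun K : ℝ => τ K x) := by
      exact Continuous.compMeasurePreservingLp (continuous_const (y := x)) hgc
        (fun K => measurePreserving_add_right volume K) (by norm_num)
    have h0 : τ 0 x = x := by
      apply Lp.ext
      filter_upwards [hτcoe 0 x] with s hs
      simpa using hs
    have := hcont.tendsto 0
    rwa [h0] at this
  -- invariance in usable form
  have hLτ : ∀ (K : ℝ) (x : 𝕏), (L (τ K x) : ℝ → ℂ) =ᵐ[volume] fun t => L x (t + K) :=
    fun K x => hinv K x (τ K x) (hτcoe K x)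
  -- essential bound for L∞ elements
  have hbddL : ∀ y : Lp ℂ ⊤ (volume : Measure ℝ),
      ∀ᵐ t ∂(volume : Measure ℝ), ‖(y : ℝ → ℂ) t‖ ≤ ‖y‖ := by
    intro y
    have h1 : ∀ᵐ t ∂(volume : Measure ℝ),
        (‖(y : ℝ → ℂ) t‖₊ : ENNReal) ≤ eLpNormEssSup (y : ℝ → ℂ) volume := ae_le_eLpNormEssSup
    filter_upwards [h1] with t ht
    have hne : eLpNorm (y : ℝ → ℂ) ⊤ volume ≠ ⊤ := Lp.eLpNorm_ne_top y
    rw [eLpNorm_exponent_top] at hne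
    have := ENNReal.toReal_mono hne ht
    rw [ENNReal.coe_toReal, coe_nnnorm] at this
    rw [Lp.norm_def, eLpNorm_exponent_top]
    exact this
  -- continuous representatives of L x
  have hrep : ∀ x : 𝕏, ∃ F : ℝ → ℂ, Continuous F ∧ (L x : ℝ → ℂ) =ᵐ[volume] F := by
    intro x
    apply exists_cont_rep _ (Lp.aestronglyMeasurable _) ‖L x‖ (hbddL (L x))
    intro ε hε
    have hε' : 0 < ε / (‖L‖ + 1) := by positivity
    obtain ⟨δ, hδ, hδp⟩ := Metric.tendsto_nhds_nhds.1 (hτcont x) (ε / (‖L‖ + 1)) hε'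
    refine ⟨δ / 2, by positivity, fun s hs => ?_⟩
    have hdist : dist (τ s x) x < ε / (‖L‖ + 1) := by
      apply hδp
      rw [Real.dist_eq, sub_zero]
      exact lt_of_le_of_lt hs (by linarith)
    have hnorm : ‖L (τ s x) - L x‖ ≤ ε := by
      rw [← map_sub]
      calc ‖L (τ s x - x)‖ ≤ ‖L‖ * ‖τ s x - x‖ := L.le_opNorm _
        _ ≤ (‖L‖ + 1) * (ε / (‖L‖ + 1)) := by
            rw [← dist_eq_norm] at *
            apply mul_le_mul (by linarith) hdist.le dist_nonneg (by positivity)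
        _ = ε := by field_simp
    filter_upwards [hbddL (L (τ s x) - L x), Lp.coeFn_sub (L (τ s x)) (L x), hLτ s x]
      with t h1 h2 h3
    have : (L x : ℝ → ℂ) (t + s) - (L x : ℝ → ℂ) t
        = ((L (τ s x) - L x : Lp ℂ ⊤ (volume : Measure ℝ)) : ℝ → ℂ) t := by
      rw [h2]; simp [← h3]
    rw [this]
    exact h1.trans hnorm
  choose Fc hFcont hFae using hrep
  -- linearity of the continuous representatives
  have hFadd : ∀ x y : 𝕏, Fc (x + y) = fun t => Fc x t + Fc y t := by
    intro x y
    refine (Continuous.ae_eq_iff_eq volume (hFcont _) ((hFcont x).add (hFcont y))).mp ?_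
    have h1 : (L (x + y) : ℝ → ℂ) =ᵐ[volume] fun t => (L x : ℝ → ℂ) t + (L y : ℝ → ℂ) t := by
      rw [map_add]
      exact Lp.coeFn_add _ _
    exact (hFae (x + y)).symm.trans (h1.trans ((hFae x).add (hFae y)))
  have hFsmul : ∀ (c : ℂ) (x : 𝕏), Fc (c • x) = fun t => c • Fc x t := by
    intro c x
    refine (Continuous.ae_eq_iff_eq volume (hFcont _) ((hFcont x).const_smul c)).mp ?_
    have h1 : (L (c • x) : ℝ → ℂ) =ᵐ[volume] fun t => c • (L x : ℝ → ℂ) t := by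
      rw [L.map_smul]
      exact Lp.coeFn_smul _ _
    exact (hFae (c • x)).symm.trans (h1.trans ((hFae x).const_smul c))
  have hFbdd : ∀ (x : 𝕏) (t : ℝ), ‖Fc x t‖ ≤ ‖L x‖ := by
    intro x
    apply cont_le_of_ae_le (hFcont x).norm
    filter_upwards [hFae x, hbddL (L x)] with t h1 h2
    rw [← h1]; exact h2
  -- the evaluation functional and its Riesz representative
  set φ₀ : 𝕏 →ₗ[ℂ] ℂ :=
    { toFun := fun x => Fc x 0
      map_add' := fun x y => by
        show Fc (x + y) 0 = Fc x 0 + Fc y 0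
        rw [hFadd]
      map_smul' := fun c x => by
        show Fc (c • x) 0 = c • Fc x 0
        rw [hFsmul] } with hφ₀
  have hφ₀bound : ∀ x : 𝕏, ‖φ₀ x‖ ≤ ‖L‖ * ‖x‖ := fun x =>
    (hFbdd x 0).trans (L.le_opNorm x)
  set φ : 𝕏 →L[ℂ] ℂ := LinearMap.mkContinuous φ₀ ‖L‖ hφ₀bound with hφ
  set g : 𝕏 := (InnerProductSpace.toDual ℂ 𝕏).symm φ with hgdef
  have hφinner : ∀ x : 𝕏, φ x = ∫ s : ℝ, conj ((g : ℝ → ℂ) s) * (x : ℝ → ℂ) s ∂volume := by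
    intro x
    have h1 : @inner ℂ _ _ g x = φ x := InnerProductSpace.toDual_symm_apply
    rw [← h1, MeasureTheory.L2.inner_def]
    apply integral_congr_ae
    filter_upwards with s
    rw [RCLike.inner_apply, mul_comm]
  -- the convolution kernel
  have hgneg : MemLp (fun v : ℝ => conj ((g : ℝ → ℂ) (-v))) 2 (volume : Measure ℝ) := by
    have h1 : MemLp (fun v : ℝ => (g : ℝ → ℂ) (-v)) 2 (volume : Measure ℝ) :=
      (Lp.memLp g).comp_measurePreserving (Measure.measurePreserving_neg volume)
    exact LipschitzWith.comp_memLp Complex.isometry_conj.lipschitz (map_zero _) h1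
  refine ⟨hgneg.toLp _, fun x => ?_⟩
  have hhcoe : (hgneg.toLp _ : ℝ → ℂ) =ᵐ[volume] fun v => conj ((g : ℝ → ℂ) (-v)) :=
    hgneg.coeFn_toLp
  -- final computation
  filter_upwards [hFae x] with t ht
  rw [ht]
  have hA : Fc (τ t x) = fun u => Fc x (u + t) := by
    have hcont2 : Continuous fun u : ℝ => Fc x (u + t) := (hFcont x).comp (continuous_add_right t)
    exact (Continuous.ae_eq_iff_eq volume (hFcont (τ t x)) hcont2).mp
      ((hFae (τ t x)).symm.trans ((hLτ t x).trans (ae_eq_translate (hFae x) t)))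
  have h1 : φ (τ t x) = Fc x t := by
    show Fc (τ t x) 0 = Fc x t
    rw [congrFun hA 0, zero_add]
  have h2 : φ (τ t x) = ∫ s : ℝ, conj ((g : ℝ → ℂ) s) * (x : ℝ → ℂ) (s + t) ∂volume := by
    rw [hφinner (τ t x)]
    apply integral_congr_ae
    filter_upwards [hτcoe t x] with s hs
    rw [hs]
  have h3 : (∫ s : ℝ, conj ((g : ℝ → ℂ) s) * (x : ℝ → ℂ) (s + t) ∂volume)
      = ∫ u : ℝ, conj ((g : ℝ → ℂ) (u - t)) * (x : ℝ → ℂ) u ∂volume := by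
    have := integral_add_right_eq_self (μ := (volume : Measure ℝ))
      (fun u : ℝ => conj ((g : ℝ → ℂ) (u - t)) * (x : ℝ → ℂ) u) t
    rw [← this]
    simp only [add_sub_cancel_right]
  have h4 : (∫ u : ℝ, conj ((g : ℝ → ℂ) (u - t)) * (x : ℝ → ℂ) u ∂volume)
      = ∫ u : ℝ, (x : ℝ → ℂ) u * (hgneg.toLp _ : ℝ → ℂ) (t - u) ∂volume := by
    apply integral_congr_ae
    have hmp : MeasurePreserving (fun u : ℝ => t - u) volume volume := by
      have := (measurePreserving_add_left volume t).comp
        (Measure.measurePreserving_neg (volume : Measure ℝ))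
      convert this using 1
      funext u
      simp only [Function.comp_apply]
      ring
    have hcomp : (fun u : ℝ => (hgneg.toLp _ : ℝ → ℂ) (t - u)) =ᵐ[volume]
        (fun u : ℝ => conj ((g : ℝ → ℂ) (-(t - u)))) :=
      hmp.quasiMeasurePreserving.ae_eq_comp hhcoe
    filter_upwards [hcomp] with u hu
    rw [hu, neg_sub, mul_comm]
  rw [← h1, h2, h3, h4]
end

section
/- Let a < b be real numbers and let h(t) = (1/√(2π)) ∫_a^b e^{iwt} dw. Then ∫_{-∞}^{∞} |h(t)|² dt = b − a and ∫_{-∞}^{0} |h(t)|² dt = (b − a)/2. -/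
open MeasureTheory Real Filter Topology

lemma aux_exp_decay {x : ℝ} (hx : 0 < x) :
    Tendsto (fun t : ℝ => Real.exp (-(x*t))) atTop (𝓝 0) := by
  have := tendsto_exp_neg_atTop_nhds_zero.comp (tendsto_id.const_mul_atTop hx)
  exact this

lemma aux1 {t : ℝ} (ht : 0 < t) :
    IntegrableOn (fun x => x * Real.exp (-(t*x))) (Set.Ioi 0) ∧
    ∫ x in Set.Ioi 0, x * Real.exp (-(t*x)) = (t^2)⁻¹ := by
  have ht' : t ≠ 0 := ht.ne'
  have hderiv : ∀ x ∈ Set.Ici (0:ℝ), HasDerivAt (fun x => -((t*x+1)/t^2) * Real.exp (-(t*x)))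
      (x * Real.exp (-(t*x))) x := by
    intro x _
    have h1 : HasDerivAt (fun x : ℝ => -((t*x+1)/t^2)) (-(t/t^2)) x := by
      simpa [Pi.neg_def] using ((((hasDerivAt_id x).const_mul t).add_const 1).div_const (t^2)).neg
    have h2 : HasDerivAt (fun x : ℝ => Real.exp (-(t*x))) (-t * Real.exp (-(t*x))) x := by
      have := (Real.hasDerivAt_exp (-(t*x))).comp x (((hasDerivAt_id x).const_mul t).neg)
      simpa [mul_comm, Function.comp_def] using this
    have := h1.mul h2
    refine this.congr_deriv ?_
    field_simp
    ring
  have hpos : ∀ x ∈ Set.Ioi (0:ℝ), 0 ≤ x * Real.exp (-(t*x)) :=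
    fun x hx => mul_nonneg (le_of_lt hx) (Real.exp_pos _).le
  have A : Tendsto (fun u : ℝ => -((u+1)/t^2) * Real.exp (-u)) atTop (𝓝 0) := by
    have h := ((tendsto_pow_mul_exp_neg_atTop_nhds_zero 1).add
      tendsto_exp_neg_atTop_nhds_zero).const_mul (-(1/t^2))
    simp only [pow_one] at h
    have : (fun u : ℝ => -((u+1)/t^2) * Real.exp (-u)) =
        fun u : ℝ => -(1/t^2) * (u * Real.exp (-u) + Real.exp (-u)) := by
      funext u; ring
    rw [this]
    simpa using h
  have htend : Tendsto (fun x => -((t*x+1)/t^2) * Real.exp (-(t*x))) atTop (𝓝 0) := by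
    have := A.comp (tendsto_id.const_mul_atTop ht)
    exact this
  refine ⟨integrableOn_Ioi_deriv_of_nonneg' hderiv hpos htend, ?_⟩
  rw [integral_Ioi_of_hasDerivAt_of_nonneg' hderiv hpos htend]
  simp

lemma aux3 {c : ℝ} (hc : 0 < c) :
    IntegrableOn (fun x => c^2/(x^2+c^2)) (Set.Ioi 0) ∧
    ∫ x in Set.Ioi 0, c^2/(x^2+c^2) = π * c / 2 := by
  have hc' : c ≠ 0 := hc.ne'
  have hderiv : ∀ x ∈ Set.Ici (0:ℝ), HasDerivAt (fun x => c * Real.arctan (x/c))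
      (c^2/(x^2+c^2)) x := by
    intro x _
    have h1 : HasDerivAt (fun x : ℝ => Real.arctan (x/c)) ((1 + (x/c)^2)⁻¹ * (1/c)) x := by
      have := (Real.hasDerivAt_arctan (x/c)).comp x ((hasDerivAt_id x).div_const c)
      simpa [one_div, Function.comp_def] using this
    have := h1.const_mul c
    refine this.congr_deriv ?_
    have h2 : x^2 + c^2 ≠ 0 := by positivity
    field_simp
    ring
  have hpos : ∀ x ∈ Set.Ioi (0:ℝ), 0 ≤ c^2/(x^2+c^2) := by
    intro x _; positivity
  have htend : Tendsto (fun x : ℝ => c * Real.arctan (x/c)) atTop (𝓝 (c * (π/2))) := by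
    have h1 : Tendsto (fun x : ℝ => x / c) atTop atTop := tendsto_id.atTop_div_const hc
    exact ((tendsto_nhds_of_tendsto_nhdsWithin Real.tendsto_arctan_atTop).comp h1).const_mul c
  refine ⟨integrableOn_Ioi_deriv_of_nonneg' hderiv hpos htend, ?_⟩
  rw [integral_Ioi_of_hasDerivAt_of_nonneg' hderiv hpos htend]
  simp [Real.arctan_zero]
  ring

lemma aux2 {c x : ℝ} (hc : 0 < c) (hx : 0 < x) :
    IntegrableOn (fun t => (1 - Real.cos (c*t)) * Real.exp (-(x*t))) (Set.Ioi 0) ∧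
    ∫ t in Set.Ioi 0, (1 - Real.cos (c*t)) * Real.exp (-(x*t)) = c^2/(x*(x^2+c^2)) := by
  have hx' : x ≠ 0 := hx.ne'
  have hxc : x^2 + c^2 ≠ 0 := by positivity
  set F : ℝ → ℝ := fun t => -(Real.exp (-(x*t)))/x
      - Real.exp (-(x*t)) * (c*Real.sin (c*t) - x*Real.cos (c*t))/(x^2+c^2) with hF
  have hexp : ∀ t : ℝ, HasDerivAt (fun t : ℝ => Real.exp (-(x*t))) (-x * Real.exp (-(x*t))) t := by
    intro t
    have := (Real.hasDerivAt_exp (-(x*t))).comp t (((hasDerivAt_id t).const_mul x).neg)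
    simpa [mul_comm, Function.comp_def] using this
  have hsin : ∀ t : ℝ, HasDerivAt (fun t : ℝ => Real.sin (c*t)) (c * Real.cos (c*t)) t := by
    intro t
    have := (Real.hasDerivAt_sin (c*t)).comp t ((hasDerivAt_id t).const_mul c)
    simpa [mul_comm, Function.comp_def] using this
  have hcos : ∀ t : ℝ, HasDerivAt (fun t : ℝ => Real.cos (c*t)) (-(c * Real.sin (c*t))) t := by
    intro t
    have := (Real.hasDerivAt_cos (c*t)).comp t ((hasDerivAt_id t).const_mul c)
    simpa [mul_comm, Function.comp_def] using this
  have hderiv : ∀ t ∈ Set.Ici (0:ℝ), HasDerivAt F ((1 - Real.cos (c*t)) * Real.exp (-(x*t))) t := by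
    intro t _
    have h1 : HasDerivAt (fun t : ℝ => -(Real.exp (-(x*t)))/x) (-(-x * Real.exp (-(x*t)))/x) t :=
      ((hexp t).neg).div_const x
    have h2 : HasDerivAt (fun t : ℝ => c*Real.sin (c*t) - x*Real.cos (c*t))
        (c * (c * Real.cos (c*t)) - x * (-(c * Real.sin (c*t)))) t :=
      ((hsin t).const_mul c).sub ((hcos t).const_mul x)
    have h3 := (((hexp t).mul h2).div_const (x^2+c^2))
    have := h1.sub h3
    refine this.congr_deriv ?_
    field_simp
    ring
  have hpos : ∀ t ∈ Set.Ioi (0:ℝ), 0 ≤ (1 - Real.cos (c*t)) * Real.exp (-(x*t)) := by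
    intro t _
    have := Real.cos_le_one (c*t)
    have := Real.exp_pos (-(x*t))
    nlinarith
  have hb : ∀ d : ℝ, Tendsto (fun t : ℝ => Real.exp (-(x*t)) * (d * Real.sin (c*t))) atTop (𝓝 0) ∧
      Tendsto (fun t : ℝ => Real.exp (-(x*t)) * (d * Real.cos (c*t))) atTop (𝓝 0) := by
    intro d
    constructor
    · refine (aux_exp_decay hx).zero_mul_isBoundedUnder_le ?_
      refine isBoundedUnder_of ⟨|d|, fun t => ?_⟩
      simp only [Function.comp_apply, norm_mul, Real.norm_eq_abs]
      rw [abs_mul]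
      calc |d| * |Real.sin (c*t)| ≤ |d| * 1 := by
            gcongr; exact abs_le.mpr ⟨Real.neg_one_le_sin _, Real.sin_le_one _⟩
        _ = |d| := mul_one _
    · refine (aux_exp_decay hx).zero_mul_isBoundedUnder_le ?_
      refine isBoundedUnder_of ⟨|d|, fun t => ?_⟩
      simp only [Function.comp_apply, norm_mul, Real.norm_eq_abs]
      rw [abs_mul]
      calc |d| * |Real.cos (c*t)| ≤ |d| * 1 := by
            gcongr; exact abs_le.mpr ⟨Real.neg_one_le_cos _, Real.cos_le_one _⟩
        _ = |d| := mul_one _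
  have htend : Tendsto F atTop (𝓝 0) := by
    have h1 : Tendsto (fun t : ℝ => -(Real.exp (-(x*t)))/x) atTop (𝓝 (-(0:ℝ)/x)) :=
      ((aux_exp_decay hx).neg).div_const x
    have h2 := ((hb (c/(x^2+c^2))).1.sub (hb (x/(x^2+c^2))).2)
    have : F = fun t => -(Real.exp (-(x*t)))/x - (Real.exp (-(x*t)) * (c/(x^2+c^2) * Real.sin (c*t))
        - Real.exp (-(x*t)) * (x/(x^2+c^2) * Real.cos (c*t))) := by
      funext t; ring
    rw [this]
    simpa using h1.sub h2
  refine ⟨integrableOn_Ioi_deriv_of_nonneg' hderiv hpos htend, ?_⟩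
  rw [integral_Ioi_of_hasDerivAt_of_nonneg' hderiv hpos htend]
  rw [hF]
  simp only [mul_zero, neg_zero, Real.exp_zero, Real.cos_zero, Real.sin_zero]
  field_simp
  ring

lemma key {c : ℝ} (hc : 0 < c) :
    IntegrableOn (fun t => (1 - Real.cos (c*t)) / t^2) (Set.Ioi 0) ∧
    ∫ t in Set.Ioi 0, (1 - Real.cos (c*t)) / t^2 = π * c / 2 := by
  have meas : Measurable (fun t : ℝ => (1 - Real.cos (c*t)) / t^2) := by fun_prop
  have nnae : 0 ≤ᵐ[volume.restrict (Set.Ioi (0:ℝ))] fun t => (1 - Real.cos (c*t)) / t^2 := by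
    filter_upwards [ae_restrict_mem measurableSet_Ioi] with t ht
    exact div_nonneg (by linarith [Real.cos_le_one (c*t)]) (sq_nonneg t)
  have hL : ∫⁻ t in Set.Ioi 0, ENNReal.ofReal ((1 - Real.cos (c*t)) / t^2)
      = ENNReal.ofReal (π * c / 2) := by
    have step1 : ∫⁻ t in Set.Ioi 0, ENNReal.ofReal ((1 - Real.cos (c*t)) / t^2)
        = ∫⁻ t in Set.Ioi 0, ∫⁻ x in Set.Ioi 0,
            ENNReal.ofReal ((1 - Real.cos (c*t)) * (x * Real.exp (-(t*x)))) := by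
      refine setLIntegral_congr_fun measurableSet_Ioi (fun t ht => ?_)
      have hcc : 0 ≤ 1 - Real.cos (c*t) := by have := Real.cos_le_one (c*t); linarith
      have hint : Integrable (fun x => (1 - Real.cos (c*t)) * (x * Real.exp (-(t*x))))
          (volume.restrict (Set.Ioi 0)) := (aux1 ht).1.const_mul _
      have nn : 0 ≤ᵐ[volume.restrict (Set.Ioi (0:ℝ))]
          fun x => (1 - Real.cos (c*t)) * (x * Real.exp (-(t*x))) := by
        filter_upwards [ae_restrict_mem measurableSet_Ioi] with x hx
        have : (0:ℝ) < x := hx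
        positivity
      rw [← ofReal_integral_eq_lintegral_ofReal hint nn, integral_const_mul, (aux1 ht).2,
        div_eq_mul_inv]
    have step2 : ∫⁻ t in Set.Ioi 0, ∫⁻ x in Set.Ioi 0,
            ENNReal.ofReal ((1 - Real.cos (c*t)) * (x * Real.exp (-(t*x))))
        = ∫⁻ x in Set.Ioi 0, ∫⁻ t in Set.Ioi 0,
            ENNReal.ofReal ((1 - Real.cos (c*t)) * (x * Real.exp (-(t*x)))) := by
      refine lintegral_lintegral_swap ?_
      have hm : Measurable (fun p : ℝ × ℝ => (1 - Real.cos (c*p.1)) * (p.2 * Real.exp (-(p.1*p.2)))) := by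
        fun_prop
      exact (ENNReal.measurable_ofReal.comp hm).aemeasurable
    have step3 : ∫⁻ x in Set.Ioi 0, ∫⁻ t in Set.Ioi 0,
            ENNReal.ofReal ((1 - Real.cos (c*t)) * (x * Real.exp (-(t*x))))
        = ∫⁻ x in Set.Ioi 0, ENNReal.ofReal (c^2/(x^2+c^2)) := by
      refine setLIntegral_congr_fun measurableSet_Ioi (fun x hx => ?_)
      have hxx : (0:ℝ) < x := hx
      have heq : ∀ t : ℝ, (1 - Real.cos (c*t)) * (x * Real.exp (-(t*x)))
          = x * ((1 - Real.cos (c*t)) * Real.exp (-(x*t))) := by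
        intro t; rw [mul_comm t x]; ring
      simp_rw [heq]
      have hint : Integrable (fun t => x * ((1 - Real.cos (c*t)) * Real.exp (-(x*t))))
          (volume.restrict (Set.Ioi 0)) := (aux2 hc hxx).1.const_mul _
      have nn : 0 ≤ᵐ[volume.restrict (Set.Ioi (0:ℝ))]
          fun t => x * ((1 - Real.cos (c*t)) * Real.exp (-(x*t))) := by
        refine ae_of_all _ fun t => ?_
        have := Real.cos_le_one (c*t)
        have := (Real.exp_pos (-(x*t))).le
        have : 0 ≤ 1 - Real.cos (c*t) := by linarith [Real.cos_le_one (c*t)]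
        positivity
      rw [← ofReal_integral_eq_lintegral_ofReal hint nn, integral_const_mul, (aux2 hc hxx).2]
      congr 1
      field_simp
    have step4 : ∫⁻ x in Set.Ioi 0, ENNReal.ofReal (c^2/(x^2+c^2))
        = ENNReal.ofReal (π * c / 2) := by
      have nn : 0 ≤ᵐ[volume.restrict (Set.Ioi (0:ℝ))] fun x => c^2/(x^2+c^2) := by
        refine ae_of_all _ fun x => by positivity
      rw [← ofReal_integral_eq_lintegral_ofReal (aux3 hc).1 nn, (aux3 hc).2]
    rw [step1, step2, step3, step4]
  have hfin : IntegrableOn (fun t => (1 - Real.cos (c*t)) / t^2) (Set.Ioi 0) := by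
    refine ⟨meas.aestronglyMeasurable, ?_⟩
    rw [hasFiniteIntegral_iff_ofReal nnae, hL]
    exact ENNReal.ofReal_lt_top
  refine ⟨hfin, ?_⟩
  rw [integral_eq_lintegral_of_nonneg_ae nnae meas.aestronglyMeasurable, hL,
    ENNReal.toReal_ofReal (by positivity)]


/-- The inverse Fourier transform `h` of the indicator of `[a,b]`
has total energy `b - a`, and half of the energy lies on the negative half-line. -/
theorem energy_of_inverse_fourier_indicator (a b : ℝ) (hab : a < b)
    (h : ℝ → ℂ)
    (hdef : ∀ t : ℝ, h t =
      (Real.sqrt (2 * π))⁻¹ * ∫ w in a..b, Complex.exp (Complex.I * w * t)) :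
    (∫ t : ℝ, ‖h t‖ ^ 2) = b - a ∧
    (∫ t in Set.Iio (0 : ℝ), ‖h t‖ ^ 2) = (b - a) / 2 := by
  set c := b - a with hcdef
  have hc : 0 < c := sub_pos.mpr hab
  have hπ : (0:ℝ) < 2*π := by positivity
  set g : ℝ → ℝ := fun t => (1 - Real.cos (c*t)) / t^2 with hg
  have habs : ∀ t : ℝ, t ≠ 0 → ‖h t‖ ^ 2 = π⁻¹ * g t := by
    intro t ht
    have ht' : (t:ℂ) ≠ 0 := by exact_mod_cast ht
    have hI : (Complex.I * (t:ℂ)) ≠ 0 := mul_ne_zero Complex.I_ne_zero ht'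
    have hnum : ‖Complex.exp (Complex.I*(t:ℂ)*(b:ℂ))
        - Complex.exp (Complex.I*(t:ℂ)*(a:ℂ))‖ ^ 2 = 2 - 2*Real.cos (c*t) := by
      have e1 : Complex.I*(t:ℂ)*(b:ℂ) = ((t*b : ℝ):ℂ) * Complex.I := by push_cast; ring
      have e2 : Complex.I*(t:ℂ)*(a:ℂ) = ((t*a : ℝ):ℂ) * Complex.I := by push_cast; ring
      rw [e1, e2, Complex.exp_mul_I, Complex.exp_mul_I,
        ← Complex.ofReal_cos, ← Complex.ofReal_sin, ← Complex.ofReal_cos, ← Complex.ofReal_sin]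
      have e3 : ((Real.cos (t*b) : ℂ) + (Real.sin (t*b) : ℂ) * Complex.I)
          - ((Real.cos (t*a) : ℂ) + (Real.sin (t*a) : ℂ) * Complex.I)
          = ((Real.cos (t*b) - Real.cos (t*a) : ℝ) : ℂ)
            + ((Real.sin (t*b) - Real.sin (t*a) : ℝ) : ℂ) * Complex.I := by push_cast; ring
      rw [e3, Complex.sq_norm, Complex.normSq_add_mul_I]
      have hcs : Real.cos (c*t) = Real.cos (t*b) * Real.cos (t*a)
          + Real.sin (t*b) * Real.sin (t*a) := by
        rw [show c*t = t*b - t*a by rw [hcdef]; ring, Real.cos_sub]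
      have p1 := Real.sin_sq_add_cos_sq (t*b)
      have p2 := Real.sin_sq_add_cos_sq (t*a)
      rw [hcs]; ring_nf; nlinarith [p1, p2]
    have hInt : (∫ w in a..b, Complex.exp (Complex.I * (w:ℂ) * (t:ℂ)))
        = (Complex.exp (Complex.I*(t:ℂ)*(b:ℂ)) - Complex.exp (Complex.I*(t:ℂ)*(a:ℂ)))
          / (Complex.I*(t:ℂ)) := by
      simp_rw [show ∀ w:ℝ, Complex.I * (w:ℂ) * (t:ℂ) = (Complex.I*(t:ℂ)) * (w:ℂ)
        from fun w => by ring]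
      exact integral_exp_mul_complex hI
    rw [hdef t, hInt, norm_mul, norm_div, norm_mul, Complex.norm_I, one_mul]
    simp only [Complex.norm_real, Real.norm_eq_abs]
    rw [abs_of_nonneg (inv_nonneg.mpr (Real.sqrt_nonneg _))]
    rw [hg]
    have ht2 : t^2 ≠ 0 := pow_ne_zero 2 ht
    have hsq : Real.sqrt (2*π) ^ 2 = 2*π := Real.sq_sqrt hπ.le
    rw [mul_pow, div_pow, inv_pow, hsq, hnum, sq_abs]
    field_simp
  have hae : ∀ᵐ t : ℝ, ‖h t‖^2 = π⁻¹ * g t := by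
    filter_upwards [compl_mem_ae_iff.mpr (measure_singleton (0:ℝ))] with t ht
    exact habs t (by simpa using ht)
  have key1 := key hc
  have geven : ∀ t : ℝ, g (-t) = g t := by
    intro t
    rw [hg]
    simp only [mul_neg, Real.cos_neg, neg_sq]
  have gabs : ∀ t : ℝ, g |t| = g t := by
    intro t
    rcases abs_choice t with h1|h1 <;> rw [h1]
    exact geven t
  have hIoi := key1.2
  have hIio : ∫ t in Set.Iio (0:ℝ), g t = π*c/2 := by
    calc ∫ t in Set.Iio (0:ℝ), g t = ∫ t in Set.Iic (0:ℝ), g t :=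
          (integral_Iic_eq_integral_Iio).symm
      _ = ∫ t in Set.Iic (0:ℝ), g (-t) :=
          (setIntegral_congr_fun measurableSet_Iic fun t _ => (geven t).symm)
      _ = ∫ t in Set.Ioi (0:ℝ), g t := by simpa using integral_comp_neg_Iic 0 g
      _ = π*c/2 := hIoi
  have hπ0 : (π:ℝ) ≠ 0 := Real.pi_ne_zero
  constructor
  · rw [integral_congr_ae hae, integral_const_mul]
    have : ∫ t : ℝ, g t = π * c := by
      calc ∫ t : ℝ, g t = ∫ t : ℝ, g |t| := by
            refine integral_congr_ae (Filter.Eventually.of_forall fun t => (gabs t).symm)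
        _ = 2 * ∫ t in Set.Ioi (0:ℝ), g t := integral_comp_abs
        _ = π * c := by rw [hIoi]; ring
    rw [this]
    field_simp
  · rw [integral_congr_ae (ae_restrict_of_ae hae), integral_const_mul, hIio]
    field_simp
end

section
/- For every fixed T > 0, the limit as λ → ∞ of ∫_{-∞}^{-T} (1 − cos(λt))/(π t²) dt exists and equals ∫_{-∞}^{-T} 1/(π t²) dt = 1/(πT); in particular, for fixed delay T > 0 the distance d(T) from the ideal filter with bandpass of length λ = b − a to the filters realizable with delay T converges to the constant c(T) = 1/√(πT) as λ → ∞, while the angle θ(T) = arcsin(d(T)/√λ) tends to 0. -/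
open MeasureTheory Real Filter
open scoped FourierTransform

lemma aux_integrableOn_Ioi (T : ℝ) (hT : 0 < T) :
    IntegrableOn (fun x : ℝ => 1 / (π * x ^ 2)) (Set.Ioi T) := by
  have h := (integrableOn_Ioi_rpow_of_lt (show (-2:ℝ) < -1 by norm_num) hT).const_mul π⁻¹
  refine MeasureTheory.IntegrableOn.congr_fun h (fun x hx => ?_) measurableSet_Ioi
  have hx0 : (0:ℝ) < x := hT.trans hx
  rw [Real.rpow_neg hx0.le, show ((2:ℝ) : ℝ) = ((2:ℕ):ℝ) by norm_num, Real.rpow_natCast]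
  rw [one_div, mul_inv]

lemma aux_integrableOn_Iio (T : ℝ) (hT : 0 < T) :
    IntegrableOn (fun t : ℝ => 1 / (π * t ^ 2)) (Set.Iio (-T)) := by
  have m : MeasurableEmbedding fun x : ℝ => -x := (Homeomorph.neg ℝ).measurableEmbedding
  have hmap : (volume : Measure ℝ) = Measure.map (fun x : ℝ => -x) volume :=
    (Measure.map_neg_eq_self (volume : Measure ℝ)).symm
  rw [IntegrableOn, hmap, ← IntegrableOn, m.integrableOn_map_iff]
  have : ((fun x : ℝ => -x) ⁻¹' Set.Iio (-T)) = Set.Ioi T := by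
    ext x; simp
  rw [this]
  refine (aux_integrableOn_Ioi T hT).congr_fun (fun x hx => ?_) measurableSet_Ioi
  simp [Function.comp]

lemma aux_integral_value (T : ℝ) (hT : 0 < T) :
    (∫ t in Set.Iio (-T), 1 / (π * t ^ 2)) = 1 / (π * T) := by
  have h1 : (∫ t in Set.Iio (-T), 1 / (π * t ^ 2))
      = ∫ x in Set.Ioi T, 1 / (π * x ^ 2) := by
    rw [← integral_Iic_eq_integral_Iio, ← integral_comp_neg_Ioi]
    refine setIntegral_congr_fun measurableSet_Ioi (fun x _ => ?_)
    simp
  rw [h1]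
  have h2 : (∫ x in Set.Ioi T, 1 / (π * x ^ 2))
      = π⁻¹ * ∫ x in Set.Ioi T, x ^ (-2 : ℝ) := by
    rw [← integral_const_mul]
    refine setIntegral_congr_fun measurableSet_Ioi (fun x hx => ?_)
    have hx0 : (0:ℝ) < x := hT.trans hx
    rw [Real.rpow_neg hx0.le, show ((2:ℝ) : ℝ) = ((2:ℕ):ℝ) by norm_num, Real.rpow_natCast]
    rw [one_div, mul_inv]
  rw [h2, integral_Ioi_rpow_of_lt (show (-2:ℝ) < -1 by norm_num) hT]
  have : T ^ ((-2 : ℝ) + 1) = T⁻¹ := by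
    norm_num
    rw [Real.rpow_neg_one]
  rw [this]
  rw [one_div, mul_inv]
  ring

lemma aux_RL (T : ℝ) (hT : 0 < T) :
    Tendsto (fun lam : ℝ => ∫ t in Set.Iio (-T), Real.cos (lam * t) * (1 / (π * t ^ 2)))
      atTop (nhds 0) := by
  set f : ℝ → ℝ := fun t => Set.indicator (Set.Iio (-T)) (fun t => 1 / (π * t ^ 2)) t with hf
  have hfInt : Integrable f :=
    (aux_integrableOn_Iio T hT).integrable_indicator measurableSet_Iio
  set F : ℝ → ℂ := fun t => (f t : ℂ) with hF
  have hFInt : Integrable F := hfInt.ofReal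
  have hRL : Tendsto (𝓕 F) (cocompact ℝ) (nhds 0) := Real.zero_at_infty_fourier F
  have hco : Tendsto (fun lam : ℝ => lam / (2 * π)) atTop (cocompact ℝ) := by
    have h1 : Tendsto (fun lam : ℝ => lam / (2 * π)) atTop atTop :=
      Tendsto.atTop_div_const (by positivity) tendsto_id
    refine h1.mono_right ?_
    rw [cocompact_eq_atBot_atTop]
    exact le_sup_right
  have hmain : Tendsto (fun lam : ℝ => (𝓕 F (lam / (2 * π))).re) atTop (nhds 0) := by
    have := (Complex.continuous_re.tendsto 0).comp (hRL.comp hco)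
    simpa [Function.comp_def] using this
  refine hmain.congr (fun lam => ?_)
  -- compute the real part of the Fourier integral
  have hconv : Integrable fun v : ℝ => Real.fourierChar (-(v * (lam / (2 * π)))) • F v := by
    have := (Real.fourierIntegral_convergent_iff (f := F) (lam / (2 * π))).2 hFInt
    simpa only [Real.inner_apply] using this
  rw [Real.fourier_real_eq]
  rw [← RCLike.re_to_complex, ← integral_re hconv]
  have hpt : ∀ v : ℝ, (Real.fourierChar (-(v * (lam / (2 * π)))) • F v).re
      = Real.cos (lam * v) * f v := by
    intro v
    have h1 : (2 * π * -(v * (lam / (2 * π)))) = -(lam * v) := by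
      field_simp
    simp only [Circle.smul_def, Real.fourierChar_apply, smul_eq_mul, h1, hF]
    rw [Complex.mul_re, Complex.exp_ofReal_mul_I_re, Real.cos_neg]
    simp
  rw [show (∫ v : ℝ, RCLike.re (Real.fourierChar (-(v * (lam / (2 * π)))) • F v))
      = ∫ v : ℝ, Real.cos (lam * v) * f v from integral_congr_ae (Filter.Eventually.of_forall
        (fun v => by simpa using hpt v))]
  have : (fun v : ℝ => Real.cos (lam * v) * f v)
      = Set.indicator (Set.Iio (-T)) (fun v => Real.cos (lam * v) * (1 / (π * v ^ 2))) := by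
    funext v
    rw [hf]
    by_cases hv : v ∈ Set.Iio (-T) <;> simp [Set.indicator_of_mem, Set.indicator_of_notMem, hv]
  rw [this, integral_indicator measurableSet_Iio]

lemma aux_integrable_cos (T : ℝ) (hT : 0 < T) (lam : ℝ) :
    IntegrableOn (fun t : ℝ => Real.cos (lam * t) * (1 / (π * t ^ 2))) (Set.Iio (-T)) := by
  refine Integrable.bdd_mul (aux_integrableOn_Iio T hT) ?_ (c := 1) (Filter.Eventually.of_forall fun t => ?_)
  · exact (Real.continuous_cos.comp (continuous_const.mul continuous_id)).aestronglyMeasurable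
  · simpa using Real.abs_cos_le_one (lam * t)

/-- For a fixed delay `T > 0`, as the bandwidth `λ → ∞` the squared
distance `d(T)²` to the filters realizable with delay `T` converges to
`∫_{-∞}^{-T} 1/(πt²) dt = 1/(πT)`, so `d(T) → 1/√(πT)`, while the angle
`θ(T) = arcsin(d(T)/√λ)` tends to `0`. -/
theorem distance_limit_as_bandwidth_grows (T : ℝ) (hT : 0 < T) :
    (∫ t in Set.Iio (-T), 1 / (π * t ^ 2)) = 1 / (π * T) ∧
    Tendsto (fun lam : ℝ =>
        ∫ t in Set.Iio (-T), (1 - Real.cos (lam * t)) / (π * t ^ 2))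
      atTop (nhds (1 / (π * T))) ∧
    Tendsto (fun lam : ℝ =>
        Real.sqrt (∫ t in Set.Iio (-T), (1 - Real.cos (lam * t)) / (π * t ^ 2)))
      atTop (nhds (1 / Real.sqrt (π * T))) ∧
    Tendsto (fun lam : ℝ => Real.arcsin
        (Real.sqrt (∫ t in Set.Iio (-T), (1 - Real.cos (lam * t)) / (π * t ^ 2)) /
          Real.sqrt lam))
      atTop (nhds 0) := by
  have hval := aux_integral_value T hT
  have hsplit : ∀ lam : ℝ,
      (∫ t in Set.Iio (-T), (1 - Real.cos (lam * t)) / (π * t ^ 2))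
        = (∫ t in Set.Iio (-T), 1 / (π * t ^ 2))
          - ∫ t in Set.Iio (-T), Real.cos (lam * t) * (1 / (π * t ^ 2)) := by
    intro lam
    rw [← integral_sub (aux_integrableOn_Iio T hT) (aux_integrable_cos T hT lam)]
    refine setIntegral_congr_fun measurableSet_Iio (fun t _ => ?_)
    rw [sub_div, mul_one_div, one_div]
  have h2 : Tendsto (fun lam : ℝ =>
      ∫ t in Set.Iio (-T), (1 - Real.cos (lam * t)) / (π * t ^ 2))
      atTop (nhds (1 / (π * T))) := by
    have := (tendsto_const_nhds (x := (1 / (π * T) : ℝ)) (f := atTop)).sub (aux_RL T hT)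
    rw [sub_zero] at this
    refine this.congr (fun lam => ?_)
    rw [hsplit lam, hval]
  have h3 : Tendsto (fun lam : ℝ =>
      Real.sqrt (∫ t in Set.Iio (-T), (1 - Real.cos (lam * t)) / (π * t ^ 2)))
      atTop (nhds (1 / Real.sqrt (π * T))) := by
    have hc : Tendsto Real.sqrt (nhds (1 / (π * T))) (nhds (Real.sqrt (1 / (π * T)))) :=
      Real.continuous_sqrt.continuousAt
    have := hc.comp h2
    rwa [one_div, Real.sqrt_inv, ← one_div] at this
  refine ⟨hval, h2, h3, ?_⟩
  have hsq : Tendsto (fun lam : ℝ => Real.sqrt lam) atTop atTop := by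
    refine (tendsto_rpow_atTop (show (0:ℝ) < 1/2 by norm_num)).congr' ?_
    filter_upwards [eventually_ge_atTop (0:ℝ)] with x hx
    rw [← Real.sqrt_eq_rpow]
  have hdiv : Tendsto (fun lam : ℝ =>
      Real.sqrt (∫ t in Set.Iio (-T), (1 - Real.cos (lam * t)) / (π * t ^ 2)) / Real.sqrt lam)
      atTop (nhds 0) := h3.div_atTop hsq
  have := (Real.continuous_arcsin.continuousAt (x := (0:ℝ))).tendsto.comp hdiv
  simpa [Function.comp_def] using this
end

section
/- For every fixed T > 0, the limit as λ → 0⁺ of (1/λ) ∫_{-∞}^{-T} (1 − cos(λt))/(π t²) dt equals 1/2. Consequently, for fixed delay T > 0, as the bandpass length b − a → 0 the distance d(T) from the ideal filter L_{[a,b]} to the filters realizable with delay T tends to 0, while the angle θ(T) = arcsin(d(T)/√(b−a)) tends to π/4. -/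
open MeasureTheory Real Filter

open Set


lemma myF_nonneg (v : ℝ) : 0 ≤ (1 - Real.cos v) / v ^ 2 :=
  div_nonneg (by linarith [Real.cos_le_one v]) (sq_nonneg v)

lemma myF_le_half (v : ℝ) : (1 - Real.cos v) / v ^ 2 ≤ 1 / 2 := by
  rcases eq_or_ne v 0 with h | h
  · simp [h]
  · rw [div_le_iff₀ (by positivity)]
    have := Real.one_sub_sq_div_two_le_cos (x := v)
    linarith

lemma myF_meas : Measurable (fun v : ℝ => (1 - Real.cos v) / v ^ 2) :=
  ((continuous_const.sub Real.continuous_cos).measurable).div (measurable_id.pow_const 2)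

lemma myF_integrable : IntegrableOn (fun v : ℝ => (1 - Real.cos v) / v ^ 2) (Ioi 0) := by
  rw [← Ioc_union_Ioi_eq_Ioi (zero_le_one (α := ℝ))]
  refine IntegrableOn.union ?_ ?_
  · refine Measure.integrableOn_of_bounded (M := 1/2) (by simp) myF_meas.aestronglyMeasurable ?_
    filter_upwards with v
    rw [Real.norm_eq_abs, abs_of_nonneg (myF_nonneg v)]
    exact myF_le_half v
  · have hg : IntegrableOn (fun v : ℝ => 2 * v ^ (-2 : ℝ)) (Ioi 1) :=
      (integrableOn_Ioi_rpow_of_lt (by norm_num) one_pos).const_mul 2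
    refine hg.mono' (myF_meas.aestronglyMeasurable.restrict) ?_
    filter_upwards [ae_restrict_mem measurableSet_Ioi] with v hv
    have hv0 : (0:ℝ) < v := lt_trans one_pos hv
    rw [Real.norm_eq_abs, abs_of_nonneg (myF_nonneg v)]
    have h2 : v ^ (-2 : ℝ) = (v ^ 2)⁻¹ := by
      rw [Real.rpow_neg hv0.le, ← Real.rpow_natCast v 2]; norm_num
    rw [h2, div_eq_mul_inv]
    exact mul_le_mul_of_nonneg_right (by linarith [Real.neg_one_le_cos v]) (by positivity)

lemma innerV_integrable {s : ℝ} (hs : 0 < s) :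
    IntegrableOn (fun v : ℝ => (1 - Real.cos v) * (s * Real.exp (-(s * v)))) (Ioi 0) := by
  have hg : IntegrableOn (fun v : ℝ => 2 * s * Real.exp (-s * v)) (Ioi 0) :=
    (exp_neg_integrableOn_Ioi 0 hs).const_mul (2 * s)
  refine hg.mono' ?_ ?_
  · exact (((continuous_const.sub Real.continuous_cos).mul
      (continuous_const.mul (Real.continuous_exp.comp (continuous_const.mul continuous_id).neg))).aestronglyMeasurable).restrict
  · filter_upwards with v
    rw [Real.norm_eq_abs, neg_mul]
    have h1 : |1 - Real.cos v| ≤ 2 := by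
      rw [abs_of_nonneg (by linarith [Real.cos_le_one v])]
      linarith [Real.neg_one_le_cos v]
    have h2 : 0 < Real.exp (-(s*v)) := Real.exp_pos _
    rw [abs_mul, abs_of_nonneg (by positivity : (0:ℝ) ≤ s * Real.exp (-(s*v))), mul_assoc]
    exact mul_le_mul_of_nonneg_right h1 (by positivity)

lemma innerV_eq {s : ℝ} (hs : 0 < s) :
    ∫ v in Ioi (0:ℝ), (1 - Real.cos v) * (s * Real.exp (-(s * v))) = (1 + s ^ 2)⁻¹ := by
  have hs2 : (1 : ℝ) + s ^ 2 ≠ 0 := by positivity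
  set φ : ℝ → ℝ := fun v =>
    -(Real.exp (-(s * v))) + s / (1 + s ^ 2) * (Real.exp (-(s * v)) * (s * Real.cos v - Real.sin v)) with hφ
  have hderiv : ∀ v : ℝ, HasDerivAt φ ((1 - Real.cos v) * (s * Real.exp (-(s * v)))) v := by
    intro v
    have he : HasDerivAt (fun v : ℝ => Real.exp (-(s * v))) (Real.exp (-(s * v)) * (-s)) v := by
      have h := ((hasDerivAt_id v).const_mul s).neg.exp
      simpa using h
    have hc : HasDerivAt (fun v : ℝ => s * Real.cos v - Real.sin v)
        (s * (-Real.sin v) - Real.cos v) v :=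
      ((Real.hasDerivAt_cos v).const_mul s).sub (Real.hasDerivAt_sin v)
    have h2 : HasDerivAt (fun v : ℝ => Real.exp (-(s * v)) * (s * Real.cos v - Real.sin v))
        (Real.exp (-(s * v)) * (-s) * (s * Real.cos v - Real.sin v)
          + Real.exp (-(s * v)) * (s * (-Real.sin v) - Real.cos v)) v := he.mul hc
    have h3 := (he.neg).add (h2.const_mul (s / (1 + s ^ 2)))
    have h4 : HasDerivAt φ _ v := h3
    convert h4 using 1
    linear_combination (s * Real.exp (-(s * v)) * Real.cos v) * mul_inv_cancel₀ hs2
  have hexp : Tendsto (fun v : ℝ => Real.exp (-(s * v))) atTop (nhds 0) := by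
    refine Real.tendsto_exp_atBot.comp (tendsto_neg_atBot_iff.mpr ?_)
    exact Tendsto.const_mul_atTop hs tendsto_id
  have hb : Tendsto (fun v : ℝ => Real.exp (-(s * v)) * (s * Real.cos v - Real.sin v))
      atTop (nhds 0) := by
    refine squeeze_zero_norm (fun v => ?_) (by simpa using hexp.const_mul (s + 1))
    rw [Real.norm_eq_abs, abs_mul, Real.abs_exp]
    rw [mul_comm (s + 1)]
    refine mul_le_mul_of_nonneg_left ?_ (Real.exp_pos _).le
    calc |s * Real.cos v - Real.sin v| ≤ |s * Real.cos v| + |Real.sin v| := abs_sub _ _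
      _ ≤ s + 1 := by
          rw [abs_mul, abs_of_pos hs]
          have := Real.abs_cos_le_one v
          have := Real.abs_sin_le_one v
          nlinarith
  have htop : Tendsto φ atTop (nhds 0) := by
    have := (hexp.neg).add (hb.const_mul (s / (1 + s ^ 2)))
    simpa using this
  have key := integral_Ioi_of_hasDerivAt_of_tendsto (a := 0)
    (by fun_prop : Continuous φ).continuousWithinAt
    (fun x _ => hderiv x) (innerV_integrable hs) htop
  rw [key, hφ]
  simp only [mul_zero, neg_zero, Real.exp_zero, Real.cos_zero, Real.sin_zero]
  field_simp
  ring

lemma innerS_integrable {v : ℝ} (hv : 0 < v) :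
    IntegrableOn (fun s : ℝ => (1 - Real.cos v) * (s * Real.exp (-(s * v)))) (Ioi 0) := by
  have h1 : IntegrableOn (fun x : ℝ => x ^ (1:ℝ) * Real.exp (-v * x ^ (1:ℝ))) (Ioi 0) :=
    integrableOn_rpow_mul_exp_neg_mul_rpow (by norm_num) one_pos hv
  have h2 : IntegrableOn (fun s : ℝ => s * Real.exp (-(s * v))) (Ioi 0) := by
    refine h1.congr_fun (fun x hx => ?_) measurableSet_Ioi
    simp only [Real.rpow_one]
    ring_nf
  exact h2.const_mul _

lemma innerS_eq {v : ℝ} (hv : 0 < v) :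
    ∫ s in Ioi (0:ℝ), (1 - Real.cos v) * (s * Real.exp (-(s * v)))
      = (1 - Real.cos v) / v ^ 2 := by
  rw [MeasureTheory.integral_const_mul]
  have h1 : ∫ s in Ioi (0:ℝ), s * Real.exp (-(s * v)) = (v ^ 2)⁻¹ := by
    have h := integral_rpow_mul_exp_neg_mul_Ioi (by norm_num : (0:ℝ) < 2) hv
    have h2 : ∀ t ∈ Ioi (0:ℝ), t ^ ((2:ℝ) - 1) * Real.exp (-(v * t))
        = t * Real.exp (-(t * v)) := by
      intro t ht
      norm_num [Real.rpow_one, mul_comm]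
    rw [setIntegral_congr_fun measurableSet_Ioi h2] at h
    rw [h, Real.Gamma_two, mul_one, show ((2:ℝ)) = ((2:ℕ):ℝ) by norm_num,
      Real.rpow_natCast, one_div, inv_pow]
  rw [h1, div_eq_mul_inv]

lemma key_integral : ∫ v in Ioi (0:ℝ), (1 - Real.cos v) / v ^ 2 = π / 2 := by
  set μ := volume.restrict (Ioi (0:ℝ)) with hμ
  set F : ℝ → ℝ → ℝ := fun v s => (1 - Real.cos v) * (s * Real.exp (-(s * v))) with hF
  have hFmeas : AEStronglyMeasurable (Function.uncurry F) (μ.prod μ) := by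
    apply Continuous.aestronglyMeasurable
    fun_prop
  have hFnonneg : ∀ v s : ℝ, 0 ≤ s → 0 ≤ F v s := by
    intro v s hs
    have h1 := Real.cos_le_one v
    exact mul_nonneg (by linarith) (mul_nonneg hs (Real.exp_pos _).le)
  have hint : Integrable (Function.uncurry F) (μ.prod μ) := by
    rw [MeasureTheory.integrable_prod_iff hFmeas]
    constructor
    · filter_upwards [ae_restrict_mem measurableSet_Ioi] with v hv
      exact innerS_integrable hv
    · refine myF_integrable.congr ?_
      filter_upwards [ae_restrict_mem measurableSet_Ioi] with v hv
      rw [← innerS_eq hv]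
      refine integral_congr_ae ?_
      filter_upwards [ae_restrict_mem measurableSet_Ioi] with s hs
      exact (Real.norm_of_nonneg (hFnonneg v s hs.le)).symm
  calc ∫ v in Ioi (0:ℝ), (1 - Real.cos v) / v ^ 2
      = ∫ v, (∫ s, F v s ∂μ) ∂μ := by
        refine integral_congr_ae ?_
        filter_upwards [ae_restrict_mem measurableSet_Ioi] with v hv
        exact (innerS_eq hv).symm
    _ = ∫ s, (∫ v, F v s ∂μ) ∂μ := MeasureTheory.integral_integral_swap hint
    _ = ∫ s in Ioi (0:ℝ), (1 + s ^ 2)⁻¹ := by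
        refine integral_congr_ae ?_
        filter_upwards [ae_restrict_mem measurableSet_Ioi] with s hs
        exact innerV_eq hs
    _ = π / 2 := by rw [integral_Ioi_inv_one_add_sq, Real.arctan_zero, sub_zero]

lemma subst_eq (T lam : ℝ) (hT : 0 < T) (hl : 0 < lam) :
    ∫ t in Iio (-T), (1 - Real.cos (lam * t)) / (π * t ^ 2)
      = lam * (π⁻¹ * ∫ v in Ioi (lam * T), (1 - Real.cos v) / v ^ 2) := by
  rw [← integral_Iic_eq_integral_Iio, ← integral_comp_neg_Ioi]
  rw [setIntegral_congr_fun measurableSet_Ioi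
    (show ∀ x ∈ Ioi T, (1 - Real.cos (lam * -x)) / (π * (-x) ^ 2)
        = lam ^ 2 * ((1 - Real.cos (lam * x)) / (π * (lam * x) ^ 2)) from fun x hx => by
      have hx0 : 0 < x := hT.trans hx
      rw [mul_neg, Real.cos_neg, neg_sq, mul_pow]
      field_simp)]
  rw [MeasureTheory.integral_const_mul,
    integral_comp_mul_left_Ioi (fun v => (1 - Real.cos v) / (π * v ^ 2)) T hl, smul_eq_mul]
  have hI : ∫ x in Ioi (lam * T), (1 - Real.cos x) / (π * x ^ 2)
      = π⁻¹ * ∫ v in Ioi (lam * T), (1 - Real.cos v) / v ^ 2 := by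
    rw [← MeasureTheory.integral_const_mul]
    refine setIntegral_congr_fun measurableSet_Ioi fun x _ => ?_
    rw [inv_mul_eq_div, div_div, mul_comm (x ^ 2) π]
  rw [hI]
  field_simp

lemma tail_tendsto (T : ℝ) (hT : 0 < T) :
    Tendsto (fun lam : ℝ => ∫ v in Ioi (lam * T), (1 - Real.cos v) / v ^ 2)
      (nhdsWithin 0 (Ioi 0)) (nhds (π / 2)) := by
  have hr : Tendsto (fun lam : ℝ => ∫ v in Ioc 0 (lam * T), (1 - Real.cos v) / v ^ 2)
      (nhdsWithin 0 (Ioi 0)) (nhds 0) := by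
    apply squeeze_zero' (g := fun lam => lam * T / 2)
    · filter_upwards [self_mem_nhdsWithin] with lam _
      exact setIntegral_nonneg measurableSet_Ioc fun v _ => myF_nonneg v
    · filter_upwards [self_mem_nhdsWithin] with lam (hlam : 0 < lam)
      calc ∫ v in Ioc 0 (lam * T), (1 - Real.cos v) / v ^ 2
          ≤ ∫ _ in Ioc 0 (lam * T), (1 / 2 : ℝ) := by
            refine setIntegral_mono_on (myF_integrable.mono_set Ioc_subset_Ioi_self)
              (integrableOn_const (by simp) (by simp)) measurableSet_Ioc
              fun v _ => myF_le_half v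
        _ = lam * T / 2 := by
            rw [setIntegral_const, smul_eq_mul, Real.volume_real_Ioc_of_le (by positivity),
              sub_zero]
            ring
    · have hc : Continuous fun lam : ℝ => lam * T / 2 := by fun_prop
      have : Tendsto (fun lam : ℝ => lam * T / 2) (nhds 0) (nhds 0) := by
        simpa using hc.tendsto 0
      exact this.mono_left nhdsWithin_le_nhds
  have heq : ∀ᶠ lam in nhdsWithin (0:ℝ) (Ioi 0),
      π / 2 - ∫ v in Ioc 0 (lam * T), (1 - Real.cos v) / v ^ 2
        = ∫ v in Ioi (lam * T), (1 - Real.cos v) / v ^ 2 := by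
    filter_upwards [self_mem_nhdsWithin] with lam (hlam : 0 < lam)
    have hsplit : ∫ v in Ioi (0:ℝ), (1 - Real.cos v) / v ^ 2
        = (∫ v in Ioc 0 (lam * T), (1 - Real.cos v) / v ^ 2)
          + ∫ v in Ioi (lam * T), (1 - Real.cos v) / v ^ 2 := by
      rw [← setIntegral_union (Ioc_disjoint_Ioi le_rfl) measurableSet_Ioi
        (myF_integrable.mono_set Ioc_subset_Ioi_self)
        (myF_integrable.mono_set (Ioi_subset_Ioi (by positivity))),
        Ioc_union_Ioi_eq_Ioi (by positivity : (0:ℝ) ≤ lam * T)]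
    rw [← key_integral]
    linarith
  exact Tendsto.congr' heq (by simpa using tendsto_const_nhds.sub hr)

theorem distance_and_angle_limits_as_bandwidth_vanishes' (T : ℝ) (hT : 0 < T) :
    Tendsto (fun lam : ℝ =>
        (1 / lam) * ∫ t in Set.Iio (-T), (1 - Real.cos (lam * t)) / (π * t ^ 2))
      (nhdsWithin 0 (Set.Ioi 0)) (nhds (1 / 2)) ∧
    Tendsto (fun lam : ℝ =>
        Real.sqrt (∫ t in Set.Iio (-T), (1 - Real.cos (lam * t)) / (π * t ^ 2)))
      (nhdsWithin 0 (Set.Ioi 0)) (nhds 0) ∧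
    Tendsto (fun lam : ℝ => Real.arcsin
        (Real.sqrt (∫ t in Set.Iio (-T), (1 - Real.cos (lam * t)) / (π * t ^ 2)) /
          Real.sqrt lam))
      (nhdsWithin 0 (Set.Ioi 0)) (nhds (π / 4)) := by
  have hInonneg : ∀ lam : ℝ,
      0 ≤ ∫ t in Set.Iio (-T), (1 - Real.cos (lam * t)) / (π * t ^ 2) := fun lam =>
    setIntegral_nonneg measurableSet_Iio fun t _ =>
      div_nonneg (by linarith [Real.cos_le_one (lam * t)]) (by positivity)
  have h1 : Tendsto (fun lam : ℝ =>
      (1 / lam) * ∫ t in Set.Iio (-T), (1 - Real.cos (lam * t)) / (π * t ^ 2))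
      (nhdsWithin 0 (Set.Ioi 0)) (nhds (1 / 2)) := by
    have heq : ∀ᶠ lam in nhdsWithin (0:ℝ) (Set.Ioi 0),
        π⁻¹ * ∫ v in Ioi (lam * T), (1 - Real.cos v) / v ^ 2
          = (1 / lam) * ∫ t in Set.Iio (-T), (1 - Real.cos (lam * t)) / (π * t ^ 2) := by
      filter_upwards [self_mem_nhdsWithin] with lam (hlam : 0 < lam)
      rw [subst_eq T lam hT hlam]
      field_simp
    refine Tendsto.congr' heq ?_
    have h2 := (tail_tendsto T hT).const_mul π⁻¹
    convert h2 using 2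
    field_simp
  have h2 : Tendsto (fun lam : ℝ =>
      ∫ t in Set.Iio (-T), (1 - Real.cos (lam * t)) / (π * t ^ 2))
      (nhdsWithin 0 (Set.Ioi 0)) (nhds 0) := by
    have heq : ∀ᶠ lam in nhdsWithin (0:ℝ) (Set.Ioi 0),
        lam * ((1 / lam) * ∫ t in Set.Iio (-T), (1 - Real.cos (lam * t)) / (π * t ^ 2))
          = ∫ t in Set.Iio (-T), (1 - Real.cos (lam * t)) / (π * t ^ 2) := by
      filter_upwards [self_mem_nhdsWithin] with lam (hlam : 0 < lam)
      rw [← mul_assoc, mul_one_div_cancel hlam.ne', one_mul]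
    have hid : Tendsto (fun lam : ℝ => lam) (nhdsWithin 0 (Set.Ioi 0)) (nhds 0) :=
      tendsto_id.mono_right nhdsWithin_le_nhds
    have hmul := hid.mul h1
    rw [zero_mul] at hmul
    exact Tendsto.congr' heq hmul
  refine ⟨h1, ?_, ?_⟩
  · have := (Real.continuous_sqrt.tendsto 0).comp h2
    simpa [Function.comp_def] using this
  · have harc : Real.arcsin (Real.sqrt (1 / 2)) = π / 4 := by
      have hsq : Real.sqrt (1 / 2 : ℝ) = Real.sin (π / 4) := by
        rw [Real.sin_pi_div_four,
          show (1 / 2 : ℝ) = (Real.sqrt 2 / 2) ^ 2 by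
            rw [div_pow, Real.sq_sqrt (by norm_num : (0:ℝ) ≤ 2)]; norm_num,
          Real.sqrt_sq (by positivity)]
      rw [hsq]
      exact Real.arcsin_sin (by linarith [Real.pi_pos]) (by linarith [Real.pi_pos])
    have heq : ∀ᶠ lam in nhdsWithin (0:ℝ) (Set.Ioi 0),
        Real.arcsin (Real.sqrt ((1 / lam) *
            ∫ t in Set.Iio (-T), (1 - Real.cos (lam * t)) / (π * t ^ 2)))
          = Real.arcsin (Real.sqrt
              (∫ t in Set.Iio (-T), (1 - Real.cos (lam * t)) / (π * t ^ 2)) /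
              Real.sqrt lam) := by
      filter_upwards [self_mem_nhdsWithin] with lam (hlam : 0 < lam)
      rw [show (1 / lam) * ∫ t in Set.Iio (-T), (1 - Real.cos (lam * t)) / (π * t ^ 2)
            = (∫ t in Set.Iio (-T), (1 - Real.cos (lam * t)) / (π * t ^ 2)) / lam by ring,
        Real.sqrt_div (hInonneg lam)]
    have hcomp := (Real.continuous_arcsin.tendsto _).comp
      ((Real.continuous_sqrt.tendsto _).comp h1)
    rw [Function.comp_def, Function.comp_def, harc] at hcomp
    exact Tendsto.congr' heq hcomp

/-- For a fixed delay `T > 0`, as the bandwidth `λ → 0⁺` the ratio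
`d(T)²/λ` tends to `1/2`; hence the distance `d(T)` tends to `0` while the angle
`θ(T) = arcsin(d(T)/√λ)` tends to `π/4`. -/
theorem distance_and_angle_limits_as_bandwidth_vanishes (T : ℝ) (hT : 0 < T) :
    Tendsto (fun lam : ℝ =>
        (1 / lam) * ∫ t in Set.Iio (-T), (1 - Real.cos (lam * t)) / (π * t ^ 2))
      (nhdsWithin 0 (Set.Ioi 0)) (nhds (1 / 2)) ∧
    Tendsto (fun lam : ℝ =>
        Real.sqrt (∫ t in Set.Iio (-T), (1 - Real.cos (lam * t)) / (π * t ^ 2)))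
      (nhdsWithin 0 (Set.Ioi 0)) (nhds 0) ∧
    Tendsto (fun lam : ℝ => Real.arcsin
        (Real.sqrt (∫ t in Set.Iio (-T), (1 - Real.cos (lam * t)) / (π * t ^ 2)) /
          Real.sqrt lam))
      (nhdsWithin 0 (Set.Ioi 0)) (nhds (π / 4)) := by
  exact distance_and_angle_limits_as_bandwidth_vanishes' T hT
end
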